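/- Let 𝕋 = ℝ/ℤ with quotient map p : ℝ → 𝕋 and Haar probability measure λ, and let f : 𝕋 → ℝ be the unique function with f(x) ∈ (−1/2, 1/2] and p(f(x)) = x for all x ∈ 𝕋. For t ∈ ℝ define α_t : 𝕋² → 𝕋² by α_t(x,y) = (x + p(t·f(y−x)), y + p(t·f(y−x))). Then: (i) every α_t preserves the product measure λ ⊗ λ on 𝕋²; (ii) α_0 = id and α_s ∘ α_t = α_{s+t} for all s, t ∈ ℝ; (iii) α_1(x,y) = (y, 2y − x) for all (x,y) ∈ 𝕋² (in particular the first coordinate of α_1(x,y) is y); (iv) α_t commutes with diagonal rotations: α_t(x + c, y + c) = α_t(x,y) + (c,c) for all c ∈ 𝕋. -/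

import Mathlib

open MeasureTheory

noncomputable section

lemma unique_lift_Ioc {z w : ℝ} (hz : z ∈ Set.Ioc (-(1/2) : ℝ) (1/2))
    (hw : w ∈ Set.Ioc (-(1/2) : ℝ) (1/2))
    (h : (z : AddCircle (1 : ℝ)) = (w : AddCircle (1 : ℝ))) : z = w := by
  rw [QuotientAddGroup.eq_iff_sub_mem] at h
  obtain ⟨n, hn⟩ := h
  obtain ⟨hz1, hz2⟩ := hz
  obtain ⟨hw1, hw2⟩ := hw
  simp only [zsmul_eq_mul, mul_one] at hn
  have h1 : (-1 : ℤ) < n := by exact_mod_cast (show ((-1 : ℤ) : ℝ) < (n : ℝ) by push_cast; linarith)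
  have h2 : n < (1 : ℤ) := by exact_mod_cast (show ((n : ℤ) : ℝ) < ((1 : ℤ) : ℝ) by push_cast; linarith)
  have hn0 : n = 0 := by omega
  rw [hn0] at hn
  push_cast at hn
  linarith

/-- **The malleability flow on the two-torus.**
Let `f : 𝕋 → ℝ` be the unique lift with values in `(−1/2, 1/2]` and let
`α_t(x,y) = (x + t·f(y−x), y + t·f(y−x))`.  Then each `α_t` preserves the Haar probability
measure `λ ⊗ λ` on `𝕋²`, `(α_t)` is a one-parameter flow, `α_1(x,y) = (y, 2y − x)`, and the
flow commutes with diagonal rotations. -/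
theorem malleability_flow_torus
    (f : AddCircle (1 : ℝ) → ℝ)
    (hf : ∀ x : AddCircle (1 : ℝ),
      f x ∈ Set.Ioc (-(1 / 2) : ℝ) (1 / 2) ∧ ((f x : ℝ) : AddCircle (1 : ℝ)) = x)
    (α : ℝ → AddCircle (1 : ℝ) × AddCircle (1 : ℝ) →
      AddCircle (1 : ℝ) × AddCircle (1 : ℝ))
    (hα : ∀ (t : ℝ) (x y : AddCircle (1 : ℝ)),
      α t (x, y) = (x + ((t * f (y - x) : ℝ) : AddCircle (1 : ℝ)),
                    y + ((t * f (y - x) : ℝ) : AddCircle (1 : ℝ)))) :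
    (∀ t : ℝ, MeasurePreserving (α t)
      ((volume : Measure (AddCircle (1 : ℝ))).prod volume)
      ((volume : Measure (AddCircle (1 : ℝ))).prod volume)) ∧
    (α 0 = id) ∧
    (∀ s t : ℝ, α s ∘ α t = α (s + t)) ∧
    (∀ x y : AddCircle (1 : ℝ), α 1 (x, y) = (y, y + y - x)) ∧
    (∀ (t : ℝ) (x y c : AddCircle (1 : ℝ)),
      α t (x + c, y + c) = ((α t (x, y)).1 + c, (α t (x, y)).2 + c)) := by
  -- measurability of f
  have hfeq : f = fun x => ((AddCircle.equivIoc 1 (-(1/2)) x : ℝ)) := by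
    funext x
    have hmem := (AddCircle.equivIoc 1 (-(1/2)) x).2
    have hmem' : ((AddCircle.equivIoc 1 (-(1/2)) x : ℝ)) ∈ Set.Ioc (-(1/2) : ℝ) (1/2) := by
      exact ⟨hmem.1, by linarith [hmem.2]⟩
    have hcoe : (((AddCircle.equivIoc 1 (-(1/2)) x : ℝ)) : AddCircle (1 : ℝ)) = x :=
      (AddCircle.equivIoc 1 (-(1/2))).symm_apply_apply x
    exact unique_lift_Ioc (hf x).1 hmem' ((hf x).2.trans hcoe.symm)
  have hfm : Measurable f := by
    rw [hfeq]
    exact measurable_subtype_coe.comp (AddCircle.measurableEquivIoc 1 (-(1/2))).measurable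
  have hcont : Continuous (fun r : ℝ => (r : AddCircle (1 : ℝ))) := AddCircle.continuous_mk' 1
  refine ⟨?_, ?_, ?_, ?_, ?_⟩
  · -- measure preserving
    intro t
    have hA : MeasurePreserving (fun q : AddCircle (1:ℝ) × AddCircle (1:ℝ) => (q.1, q.2 - q.1))
        ((volume : Measure (AddCircle (1:ℝ))).prod volume) (volume.prod volume) :=
      (MeasurePreserving.id volume).skew_product
        (measurable_snd.sub measurable_fst)
        (Filter.Eventually.of_forall fun x => (measurePreserving_sub_right volume x).map_eq)
    have hB : MeasurePreserving
        (fun q : AddCircle (1:ℝ) × AddCircle (1:ℝ) =>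
          (q.1, q.2 + ((t * f q.1 : ℝ) : AddCircle (1:ℝ))))
        ((volume : Measure (AddCircle (1:ℝ))).prod volume) (volume.prod volume) :=
      (MeasurePreserving.id volume).skew_product
        (g := fun d x => x + ((t * f d : ℝ) : AddCircle (1:ℝ)))
        (measurable_snd.add ((hcont.measurable.comp
          (measurable_const.mul hfm)).comp measurable_fst))
        (Filter.Eventually.of_forall fun d => (measurePreserving_add_right volume _).map_eq)
    have hC : MeasurePreserving (fun q : AddCircle (1:ℝ) × AddCircle (1:ℝ) => (q.1, q.2 + q.1))
        ((volume : Measure (AddCircle (1:ℝ))).prod volume) (volume.prod volume) :=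
      (MeasurePreserving.id volume).skew_product
        (measurable_snd.add measurable_fst)
        (Filter.Eventually.of_forall fun x => (measurePreserving_add_right volume x).map_eq)
    have hsw : MeasurePreserving
        (Prod.swap : AddCircle (1:ℝ) × AddCircle (1:ℝ) → AddCircle (1:ℝ) × AddCircle (1:ℝ))
        ((volume : Measure (AddCircle (1:ℝ))).prod volume) (volume.prod volume) :=
      Measure.measurePreserving_swap
    have hdecomp : α t = (fun q : AddCircle (1:ℝ) × AddCircle (1:ℝ) => (q.1, q.2 + q.1)) ∘
        Prod.swap ∘
        (fun q : AddCircle (1:ℝ) × AddCircle (1:ℝ) =>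
          (q.1, q.2 + ((t * f q.1 : ℝ) : AddCircle (1:ℝ)))) ∘ Prod.swap ∘
        (fun q : AddCircle (1:ℝ) × AddCircle (1:ℝ) => (q.1, q.2 - q.1)) := by
      funext q
      obtain ⟨x, y⟩ := q
      simp only [Function.comp_apply, Prod.swap_prod_mk, hα]
      simp only [Prod.mk.injEq]
      exact ⟨trivial, by abel⟩
    rw [hdecomp]
    exact hC.comp (hsw.comp (hB.comp (hsw.comp hA)))
  · -- α 0 = id
    funext q
    obtain ⟨x, y⟩ := q
    simp [hα]
  · -- flow
    intro s t
    funext q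
    obtain ⟨x, y⟩ := q
    simp only [Function.comp_apply, hα]
    have hd : (y + ((t * f (y - x) : ℝ) : AddCircle (1:ℝ)))
        - (x + ((t * f (y - x) : ℝ) : AddCircle (1:ℝ))) = y - x := by abel
    rw [hd]
    have hsplit : (((s + t) * f (y - x) : ℝ) : AddCircle (1:ℝ))
        = ((t * f (y - x) : ℝ) : AddCircle (1:ℝ)) + ((s * f (y - x) : ℝ) : AddCircle (1:ℝ)) := by
      rw [← QuotientAddGroup.mk_add]
      congr 1
      ring
    rw [hsplit]
    simp only [Prod.mk.injEq]
    exact ⟨by abel, by abel⟩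
  · -- α 1
    intro x y
    rw [hα, one_mul, (hf (y - x)).2]
    simp only [Prod.mk.injEq]
    exact ⟨by abel, by abel⟩
  · -- diagonal rotations
    intro t x y c
    rw [hα, hα]
    have hd : (y + c) - (x + c) = y - x := by abel
    rw [hd]
    simp only [Prod.mk.injEq]
    exact ⟨by abel, by abel⟩
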